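/- Let q ≥ 2 and j ≥ 1. With b_{j,m,n} defined by b_{j,m,1} = [1^m 0^j]_q and b_{j,m,n+1} = b_{j,m,n} - (q^{j+m-n} - 1) wherever valid, one has for all m ≥ q^j: b_{j+1,m,q^j+1} = [1^{m+1-q^j} 0^j]_q = b_{j,m+1-q^j,1}. That is, after q^j subtraction steps the table for parameter j+1 reproduces the table for parameter j shifted by q^j - 1 rows. -/

import Mathlib

/-- `[1^m 0^j]_q = ∑_{i<m} q^{j+i}`. -/
def onesZeros (q j m : ℕ) : ℕ := ∑ i ∈ Finset.range m, q ^ (j + i)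

/-- `bSeq q j m t` is `b_{j,m,t+1}`, defined by `b_{j,m,1} = [1^m 0^j]_q`
and `b_{j,m,n+1} = b_{j,m,n} - (q^{j+m-n} - 1)`. -/
def bSeq (q j m : ℕ) : ℕ → ℕ
  | 0 => onesZeros q j m
  | t + 1 => bSeq q j m t - (q ^ (j + m - t - 1) - 1)

/-- for `q ≥ 2`, `j ≥ 1` and `m ≥ q^j`:
`b_{j+1,m,q^j+1} = [1^{m+1-q^j} 0^j]_q = b_{j,m+1-q^j,1}`. -/
theorem stmt8 (q j : ℕ) (hq : 2 ≤ q) (hj : 1 ≤ j) (m : ℕ) (hm : q ^ j ≤ m) :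
    bSeq q (j + 1) m (q ^ j) = onesZeros q j (m + 1 - q ^ j) ∧
      bSeq q (j + 1) m (q ^ j) = bSeq q j (m + 1 - q ^ j) 0 := by
  have key : ∀ t, t ≤ m → bSeq q (j + 1) m t = onesZeros q (j + 1) (m - t) + t := by
    intro t
    induction t with
    | zero => intro _; simp [bSeq]
    | succ t ih =>
      intro ht
      have ht' : t < m := ht
      have hsplit : onesZeros q (j + 1) (m - t) =
          onesZeros q (j + 1) (m - (t + 1)) + q ^ (j + 1 + m - t - 1) := by
        have : m - t = (m - (t + 1)) + 1 := by omega
        rw [this, onesZeros, Finset.sum_range_succ, ← onesZeros]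
        congr 1
        congr 1
        omega
      have hP : 1 ≤ q ^ (j + 1 + m - t - 1) := Nat.one_le_pow _ _ (by omega)
      rw [bSeq, ih (le_of_lt ht'), hsplit]
      omega
  have h1 : bSeq q (j + 1) m (q ^ j) = onesZeros q (j + 1) (m - q ^ j) + q ^ j :=
    key _ hm
  have h2 : onesZeros q j (m + 1 - q ^ j) = onesZeros q (j + 1) (m - q ^ j) + q ^ j := by
    have : m + 1 - q ^ j = (m - q ^ j) + 1 := by omega
    rw [this]
    unfold onesZeros
    rw [Finset.sum_range_succ']
    simp only [Nat.add_zero]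
    congr 1
    apply Finset.sum_congr rfl
    intro i _
    congr 1
    omega
  refine ⟨by rw [h1, h2], ?_⟩
  show _ = onesZeros q j (m + 1 - q ^ j)
  rw [h1, h2]
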